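/- Let r, s ∈ ℝ with s > 0, r > 0 and r + s < 1. Then there is a constant C(r,s) such that for all a ∈ ℝ: ∫_{−∞}^{+∞} |t|^{s−1} (1 + |t + a|)^{r−1} dt ≤ C(r,s) (1 + |a|)^{r+s−1}. -/

import Mathlib

open scoped BigOperators

open MeasureTheory Set

lemma setLIntegral_comp_mequiv (e : ℝ ≃ᵐ ℝ) (he : MeasurePreserving e volume volume)
    (g : ℝ → ENNReal) (E : Set ℝ) :
    ∫⁻ x in e ⁻¹' E, g (e x) = ∫⁻ y in E, g y := by
  calc ∫⁻ x in e ⁻¹' E, g (e x)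
      = ∫⁻ y, g y ∂(Measure.map e (volume.restrict (e ⁻¹' E))) := (lintegral_map_equiv g e).symm
    _ = ∫⁻ y, g y ∂((Measure.map e volume).restrict E) := by
        rw [e.measurableEmbedding.restrict_map]
    _ = ∫⁻ y in E, g y := by rw [he.map_eq]

lemma setLIntegral_neg_preimage (g : ℝ → ENNReal) (hg : ∀ x, g (-x) = g x) (E : Set ℝ) :
    ∫⁻ x in Neg.neg ⁻¹' E, g x = ∫⁻ y in E, g y := by
  have h1 : ∀ x, g x = g ((MeasurableEquiv.neg ℝ) x) := fun x => (hg x).symm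
  calc ∫⁻ x in Neg.neg ⁻¹' E, g x
      = ∫⁻ x in (MeasurableEquiv.neg ℝ) ⁻¹' E, g ((MeasurableEquiv.neg ℝ) x) :=
        lintegral_congr h1
    _ = ∫⁻ y in E, g y :=
        setLIntegral_comp_mequiv _ (Measure.measurePreserving_neg volume) g E

lemma setLIntegral_add_right_preimage (a : ℝ) (g : ℝ → ENNReal) (E : Set ℝ) :
    ∫⁻ x in (fun t => t + a) ⁻¹' E, g (x + a) = ∫⁻ y in E, g y := by
  have := setLIntegral_comp_mequiv (MeasurableEquiv.addRight a)
    (measurePreserving_add_right volume a) g E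
  simpa using this

lemma even_bound_Icc (g : ℝ → ENNReal) (hg : ∀ x, g (-x) = g x) (b : ℝ) :
    ∫⁻ t in Icc (-b) b, g t ≤ 2 * ∫⁻ t in Ioc 0 b, g t := by
  have hneg : ∫⁻ t in Ioc (-b) 0, g t ≤ ∫⁻ t in Ioc 0 b, g t := by
    have hset : Ioc (-b) 0 = Neg.neg ⁻¹' Ico 0 b := by
      ext x
      simp only [mem_Ioc, mem_preimage, mem_Ico]
      constructor <;> rintro ⟨h1, h2⟩ <;> exact ⟨by linarith, by linarith⟩
    rw [hset, setLIntegral_neg_preimage g hg]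
    calc ∫⁻ t in Ico 0 b, g t ≤ ∫⁻ t in {0} ∪ Ioc 0 b, g t := by
          apply lintegral_mono_set
          intro x hx
          rcases eq_or_lt_of_le hx.1 with h | h
          · exact Or.inl h.symm
          · exact Or.inr ⟨h, hx.2.le⟩
      _ ≤ (∫⁻ t in ({0} : Set ℝ), g t) + ∫⁻ t in Ioc 0 b, g t := lintegral_union_le _ _ _
      _ = ∫⁻ t in Ioc 0 b, g t := by
          rw [setLIntegral_measure_zero _ _ Real.volume_singleton, zero_add]
  calc ∫⁻ t in Icc (-b) b, g t ≤ ∫⁻ t in ({-b} ∪ Ioc (-b) 0) ∪ Ioc 0 b, g t := by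
        apply lintegral_mono_set
        intro x hx
        by_cases hx0 : 0 < x
        · exact Or.inr ⟨hx0, hx.2⟩
        · push_neg at hx0
          rcases eq_or_lt_of_le hx.1 with h | h
          · exact Or.inl (Or.inl h.symm)
          · exact Or.inl (Or.inr ⟨h, hx0⟩)
    _ ≤ (∫⁻ t in ({-b} : Set ℝ) ∪ Ioc (-b) 0, g t) + ∫⁻ t in Ioc 0 b, g t :=
        lintegral_union_le _ _ _
    _ ≤ ((∫⁻ t in ({-b} : Set ℝ), g t) + ∫⁻ t in Ioc (-b) 0, g t) + ∫⁻ t in Ioc 0 b, g t :=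
        add_le_add_left (lintegral_union_le _ _ _) _
    _ = (∫⁻ t in Ioc (-b) 0, g t) + ∫⁻ t in Ioc 0 b, g t := by
        rw [setLIntegral_measure_zero _ _ Real.volume_singleton, zero_add]
    _ ≤ (∫⁻ t in Ioc 0 b, g t) + ∫⁻ t in Ioc 0 b, g t := add_le_add_left hneg _
    _ = 2 * ∫⁻ t in Ioc 0 b, g t := (two_mul _).symm

lemma even_bound_tail (g : ℝ → ENNReal) (hg : ∀ x, g (-x) = g x) (c : ℝ) :
    ∫⁻ t in {t : ℝ | c ≤ |t|}, g t ≤ 2 * ∫⁻ t in Ioi c, g t := by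
  have hIci : ∫⁻ t in Ici c, g t ≤ ∫⁻ t in Ioi c, g t := by
    calc ∫⁻ t in Ici c, g t ≤ ∫⁻ t in {c} ∪ Ioi c, g t := by
          apply lintegral_mono_set
          intro x hx
          rcases eq_or_lt_of_le (mem_Ici.mp hx) with h | h
          · exact Or.inl h.symm
          · exact Or.inr h
      _ ≤ (∫⁻ t in ({c} : Set ℝ), g t) + ∫⁻ t in Ioi c, g t := lintegral_union_le _ _ _
      _ = ∫⁻ t in Ioi c, g t := by
          rw [setLIntegral_measure_zero _ _ Real.volume_singleton, zero_add]
  have hneg : ∫⁻ t in Iic (-c), g t ≤ ∫⁻ t in Ioi c, g t := by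
    have hset : Iic (-c) = Neg.neg ⁻¹' Ici c := by
      ext x; simp only [mem_Iic, mem_preimage, mem_Ici]
      constructor <;> intro h <;> linarith
    rw [hset, setLIntegral_neg_preimage g hg]
    exact hIci
  calc ∫⁻ t in {t : ℝ | c ≤ |t|}, g t ≤ ∫⁻ t in Iic (-c) ∪ Ici c, g t := by
        apply lintegral_mono_set
        intro x hx
        simp only [mem_setOf_eq] at hx
        rcases le_or_gt 0 x with h | h
        · exact Or.inr (by rw [abs_of_nonneg h] at hx; exact hx)
        · exact Or.inl (by rw [abs_of_neg h] at hx; simp only [mem_Iic]; linarith)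
    _ ≤ (∫⁻ t in Iic (-c), g t) + ∫⁻ t in Ici c, g t := lintegral_union_le _ _ _
    _ ≤ (∫⁻ t in Ioi c, g t) + ∫⁻ t in Ioi c, g t := add_le_add hneg hIci
    _ = 2 * ∫⁻ t in Ioi c, g t := (two_mul _).symm

lemma lint_Ioc_rpow (p b : ℝ) (hp : -1 < p) (hb : 0 < b) :
    ∫⁻ t in Ioc 0 b, ENNReal.ofReal (|t| ^ p) = ENNReal.ofReal (b ^ (p+1) / (p+1)) := by
  have hcongr : ∫⁻ t in Ioc 0 b, ENNReal.ofReal (|t| ^ p)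
      = ∫⁻ t in Ioc 0 b, ENNReal.ofReal (t ^ p) :=
    setLIntegral_congr_fun measurableSet_Ioc (fun t ht => by rw [abs_of_pos ht.1])
  rw [hcongr]
  have hint : IntegrableOn (fun t : ℝ => t ^ p) (Ioc 0 b) :=
    (intervalIntegral.intervalIntegrable_rpow' hp).1
  rw [← ofReal_integral_eq_lintegral_ofReal hint
    (by filter_upwards [ae_restrict_mem measurableSet_Ioc] with t ht
        exact Real.rpow_nonneg ht.1.le p)]
  congr 1
  rw [← intervalIntegral.integral_of_le hb.le, integral_rpow (Or.inl hp),
    Real.zero_rpow (by linarith : p + 1 ≠ 0), sub_zero]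

lemma lint_Ioi_rpow (p c : ℝ) (hp : p < -1) (hc : 0 < c) :
    ∫⁻ t in Ioi c, ENNReal.ofReal (|t| ^ p) = ENNReal.ofReal (-c ^ (p+1) / (p+1)) := by
  have hcongr : ∫⁻ t in Ioi c, ENNReal.ofReal (|t| ^ p)
      = ∫⁻ t in Ioi c, ENNReal.ofReal (t ^ p) :=
    setLIntegral_congr_fun measurableSet_Ioi
      (fun t ht => by rw [abs_of_pos (lt_trans hc ht)])
  rw [hcongr]
  have hint : IntegrableOn (fun t : ℝ => t ^ p) (Ioi c) := integrableOn_Ioi_rpow_of_lt hp hc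
  rw [← ofReal_integral_eq_lintegral_ofReal hint
    (by filter_upwards [ae_restrict_mem measurableSet_Ioi] with t ht
        exact Real.rpow_nonneg (lt_trans hc ht).le p)]
  rw [integral_Ioi_rpow_of_lt hp hc]

lemma lint_Ioc_one_add_rpow (p b : ℝ) (hp : -1 < p) (hb : 0 < b) :
    ∫⁻ u in Ioc 0 b, ENNReal.ofReal ((1 + |u|) ^ p)
      = ENNReal.ofReal (((b+1) ^ (p+1) - 1) / (p+1)) := by
  have hcongr : ∫⁻ u in Ioc 0 b, ENNReal.ofReal ((1 + |u|) ^ p)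
      = ∫⁻ u in Ioc 0 b, ENNReal.ofReal ((u + 1) ^ p) :=
    setLIntegral_congr_fun measurableSet_Ioc
      (fun u hu => by rw [abs_of_pos hu.1, add_comm])
  rw [hcongr]
  have h0 : IntervalIntegrable (fun x : ℝ => x ^ p) volume 1 (b+1) :=
    intervalIntegral.intervalIntegrable_rpow' hp
  have h1 : IntervalIntegrable (fun x : ℝ => (x + 1) ^ p) volume 0 b := by
    simpa using h0.comp_add_right 1
  rw [← ofReal_integral_eq_lintegral_ofReal h1.1
    (by filter_upwards [ae_restrict_mem measurableSet_Ioc] with u hu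
        exact Real.rpow_nonneg (by linarith [hu.1] : (0:ℝ) ≤ u + 1) p)]
  congr 1
  rw [← intervalIntegral.integral_of_le hb.le]
  rw [intervalIntegral.integral_comp_add_right (fun x : ℝ => x ^ p) 1]
  rw [integral_rpow (Or.inl hp), zero_add, Real.one_rpow]

/-- for `r, s ∈ ℝ` with `s > 0`, `r > 0`, `r + s < 1`, there is a constant
`C(r,s)` such that for all `a ∈ ℝ`:
`∫ |t|^{s-1} (1+|t+a|)^{r-1} dt ≤ C(r,s) (1+|a|)^{r+s-1}`. -/
theorem integral_abs_rpow_kernel_bound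
    (r s : ℝ) (hs : 0 < s) (hr : 0 < r) (hrs : r + s < 1) :
    ∃ C : ℝ, 0 < C ∧ ∀ a : ℝ,
      ∫⁻ t : ℝ, ENNReal.ofReal (|t| ^ (s - 1) * (1 + |t + a|) ^ (r - 1))
        ≤ ENNReal.ofReal (C * (1 + |a|) ^ (r + s - 1)) := by
  have hr1 : r < 1 := by linarith
  have hs1 : s < 1 := by linarith
  have hpos : (0:ℝ) < 1 - (r + s) := by linarith
  refine ⟨4/s + 16/r + 8/(1-(r+s)), by positivity, fun a => ?_⟩
  set A : ℝ := 1 + |a| with hAdef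
  have hA1 : 1 ≤ A := le_add_of_nonneg_right (abs_nonneg a)
  have hA0 : (0:ℝ) < A := by linarith
  have haA : |a| ≤ A := by rw [hAdef]; linarith
  set b : ℝ := A / 2 with hbdef
  have hb0 : (0:ℝ) < b := by positivity
  set f : ℝ → ENNReal := fun t => ENNReal.ofReal (|t| ^ (s - 1) * (1 + |t + a|) ^ (r - 1))
    with hfdef
  have hfm : Measurable f := by fun_prop
  set S1 : Set ℝ := Set.Ioo (-b) b with hS1def
  set S2 : Set ℝ := {t : ℝ | b ≤ |t| ∧ |t| < 2*A} with hS2def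
  set S3 : Set ℝ := {t : ℝ | 2*A ≤ |t|} with hS3def
  have hS1 : MeasurableSet S1 := measurableSet_Ioo
  have hS2 : MeasurableSet S2 := by
    have : S2 = abs ⁻¹' (Set.Ico b (2*A)) := by
      ext t; simp [hS2def, Set.mem_Ico]
    rw [this]; exact measurable_abs measurableSet_Ico
  have hS3 : MeasurableSet S3 := by
    have : S3 = abs ⁻¹' (Set.Ici (2*A)) := by
      ext t; simp [hS3def, Set.mem_Ici]
    rw [this]; exact measurable_abs measurableSet_Ici
  -- Region 1 bound
  have P1 : ∫⁻ t in S1, f t ≤ ENNReal.ofReal (4/s * A^(r+s-1)) := by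
    have key : ∀ t ∈ S1, f t
        ≤ ENNReal.ofReal (b^(r-1)) * ENNReal.ofReal (|t|^(s-1)) := by
      intro t ht
      rw [← ENNReal.ofReal_mul (Real.rpow_nonneg hb0.le _)]
      apply ENNReal.ofReal_le_ofReal
      have ht' : |t| < b := abs_lt.mpr ⟨ht.1, ht.2⟩
      have habs : |a| - |t| ≤ |t + a| := by
        have h := abs_sub_abs_le_abs_sub a (-t)
        rw [abs_neg, sub_neg_eq_add, add_comm] at h
        exact h
      have h1 : b ≤ 1 + |t + a| := by
        rw [hbdef, hAdef] at *
        linarith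
      have h2 : (1 + |t + a|)^(r-1) ≤ b^(r-1) :=
        Real.rpow_le_rpow_of_nonpos hb0 h1 (by linarith)
      rw [mul_comm (b^(r-1))]
      exact mul_le_mul_of_nonneg_left h2 (Real.rpow_nonneg (abs_nonneg t) _)
    have hQ := lint_Ioc_rpow (s-1) b (by linarith) hb0
    rw [show s-1+1 = s by ring] at hQ
    calc ∫⁻ t in S1, f t
        ≤ ∫⁻ t in S1, ENNReal.ofReal (b^(r-1)) * ENNReal.ofReal (|t|^(s-1)) :=
          setLIntegral_mono' hS1 key
      _ = ENNReal.ofReal (b^(r-1)) * ∫⁻ t in S1, ENNReal.ofReal (|t|^(s-1)) :=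
          lintegral_const_mul' _ _ ENNReal.ofReal_ne_top
      _ ≤ ENNReal.ofReal (b^(r-1)) * (2 * ENNReal.ofReal (b^s/s)) := by
          apply mul_le_mul_right
          calc ∫⁻ t in S1, ENNReal.ofReal (|t|^(s-1))
              ≤ ∫⁻ t in Set.Icc (-b) b, ENNReal.ofReal (|t|^(s-1)) :=
                lintegral_mono_set Set.Ioo_subset_Icc_self
            _ ≤ 2 * ∫⁻ t in Set.Ioc 0 b, ENNReal.ofReal (|t|^(s-1)) :=
                even_bound_Icc _ (fun x => by rw [abs_neg]) b
            _ = 2 * ENNReal.ofReal (b^s/s) := by rw [hQ]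
      _ ≤ ENNReal.ofReal (4/s * A^(r+s-1)) := by
          rw [show (2:ENNReal) = ENNReal.ofReal 2 by simp,
            ← ENNReal.ofReal_mul (by norm_num),
            ← ENNReal.ofReal_mul (Real.rpow_nonneg hb0.le _)]
          apply ENNReal.ofReal_le_ofReal
          have e1 : b^(r-1) * b^s = b^(r+s-1) := by
            rw [← Real.rpow_add hb0]; ring_nf
          have e2 : b^(r+s-1) ≤ 2 * A^(r+s-1) := by
            have hdiv : b^(r+s-1) = A^(r+s-1) / 2^(r+s-1) := by
              rw [hbdef, Real.div_rpow hA0.le (by norm_num)]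
            have h2p : (1:ℝ)/2 ≤ 2^(r+s-1) := by
              have h := Real.rpow_le_rpow_of_exponent_le one_le_two
                (by linarith : (-1:ℝ) ≤ r+s-1)
              rw [Real.rpow_neg_one] at h
              linarith [h]
            have hApos : (0:ℝ) < A^(r+s-1) := Real.rpow_pos_of_pos hA0 _
            rw [hdiv, div_le_iff₀ (by linarith : (0:ℝ) < 2^(r+s-1))]
            nlinarith [mul_le_mul_of_nonneg_left h2p hApos.le]
          have hrw : b^(r-1) * (2 * (b^s/s)) = 2 * (b^(r-1) * b^s) / s := by ring
          rw [hrw, e1, div_le_iff₀ hs, show 4/s*A^(r+s-1)*s = 4*A^(r+s-1) by field_simp]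
          linarith [e2]
  -- Region 2 bound
  have P2 : ∫⁻ t in S2, f t ≤ ENNReal.ofReal (16/r * A^(r+s-1)) := by
    have key : ∀ t ∈ S2, f t
        ≤ ENNReal.ofReal (b^(s-1)) * ENNReal.ofReal ((1+|t+a|)^(r-1)) := by
      intro t ht
      rw [← ENNReal.ofReal_mul (Real.rpow_nonneg hb0.le _)]
      apply ENNReal.ofReal_le_ofReal
      exact mul_le_mul_of_nonneg_right
        (Real.rpow_le_rpow_of_nonpos hb0 ht.1 (by linarith))
        (Real.rpow_nonneg (by positivity) _)
    have hQ := lint_Ioc_one_add_rpow (r-1) (3*A) (by linarith) (by positivity)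
    rw [show r-1+1 = r by ring] at hQ
    have Q2 : ∫⁻ t in S2, ENNReal.ofReal ((1+|t+a|)^(r-1))
        ≤ 2 * ENNReal.ofReal (((3*A+1)^r - 1)/r) := by
      have hsub : S2 ⊆ (fun t => t + a) ⁻¹' Set.Icc (-(3*A)) (3*A) := by
        intro t ht
        simp only [Set.mem_preimage, Set.mem_Icc]
        refine abs_le.mp ?_
        have h1 := abs_add_le t a
        have h2 : |t| < 2*A := ht.2
        linarith
      calc ∫⁻ t in S2, ENNReal.ofReal ((1+|t+a|)^(r-1))
          ≤ ∫⁻ t in (fun t => t + a) ⁻¹' Set.Icc (-(3*A)) (3*A),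
              ENNReal.ofReal ((1+|t+a|)^(r-1)) := lintegral_mono_set hsub
        _ = ∫⁻ u in Set.Icc (-(3*A)) (3*A), ENNReal.ofReal ((1+|u|)^(r-1)) :=
            setLIntegral_add_right_preimage a (fun u => ENNReal.ofReal ((1+|u|)^(r-1))) _
        _ ≤ 2 * ∫⁻ u in Set.Ioc 0 (3*A), ENNReal.ofReal ((1+|u|)^(r-1)) :=
            even_bound_Icc _ (fun x => by rw [abs_neg]) (3*A)
        _ = 2 * ENNReal.ofReal (((3*A+1)^r - 1)/r) := by rw [hQ]
    calc ∫⁻ t in S2, f t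
        ≤ ∫⁻ t in S2, ENNReal.ofReal (b^(s-1)) * ENNReal.ofReal ((1+|t+a|)^(r-1)) :=
          setLIntegral_mono' hS2 key
      _ = ENNReal.ofReal (b^(s-1)) * ∫⁻ t in S2, ENNReal.ofReal ((1+|t+a|)^(r-1)) :=
          lintegral_const_mul' _ _ ENNReal.ofReal_ne_top
      _ ≤ ENNReal.ofReal (b^(s-1)) * (2 * ENNReal.ofReal (((3*A+1)^r - 1)/r)) :=
          mul_le_mul_right Q2 _
      _ ≤ ENNReal.ofReal (16/r * A^(r+s-1)) := by
          rw [show (2:ENNReal) = ENNReal.ofReal 2 by simp,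
            ← ENNReal.ofReal_mul (by norm_num),
            ← ENNReal.ofReal_mul (Real.rpow_nonneg hb0.le _)]
          apply ENNReal.ofReal_le_ofReal
          have f1 : b^(s-1) ≤ 2 * A^(s-1) := by
            have hdiv : b^(s-1) = A^(s-1) / 2^(s-1) := by
              rw [hbdef, Real.div_rpow hA0.le (by norm_num)]
            have h2p : (1:ℝ)/2 ≤ 2^(s-1) := by
              have h := Real.rpow_le_rpow_of_exponent_le one_le_two
                (by linarith : (-1:ℝ) ≤ s-1)
              rw [Real.rpow_neg_one] at h
              linarith [h]
            have hApos : (0:ℝ) < A^(s-1) := Real.rpow_pos_of_pos hA0 _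
            rw [hdiv, div_le_iff₀ (by linarith : (0:ℝ) < 2^(s-1))]
            nlinarith [mul_le_mul_of_nonneg_left h2p hApos.le]
          have f2 : (3*A+1)^r - 1 ≤ 4 * A^r := by
            have h1 : (3*A+1)^r ≤ (4*A)^r :=
              Real.rpow_le_rpow (by positivity) (by linarith) hr.le
            have h2 : (4*A)^r = 4^r * A^r := Real.mul_rpow (by norm_num) hA0.le
            have h3 : (4:ℝ)^r ≤ 4 := by
              have h := Real.rpow_le_rpow_of_exponent_le (by norm_num : (1:ℝ) ≤ 4) hr1.le
              rwa [Real.rpow_one] at h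
            have hAr : (0:ℝ) ≤ A^r := Real.rpow_nonneg hA0.le _
            nlinarith
          have f3 : (0:ℝ) ≤ (3*A+1)^r - 1 := by
            have h1 : (1:ℝ) = 1^r := (Real.one_rpow r).symm
            have h2 : (1:ℝ)^r ≤ (3*A+1)^r :=
              Real.rpow_le_rpow zero_le_one (by linarith) hr.le
            linarith
          have f4 : A^(s-1) * A^r = A^(r+s-1) := by
            rw [← Real.rpow_add hA0]; ring_nf
          have hrw : b^(s-1) * (2 * (((3*A+1)^r - 1)/r))
              = 2 * (b^(s-1) * ((3*A+1)^r - 1)) / r := by ring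
          rw [hrw, div_le_iff₀ hr, show 16/r*A^(r+s-1)*r = 16*A^(r+s-1) by field_simp]
          have hmul := mul_le_mul f1 f2 f3 (by positivity : (0:ℝ) ≤ 2 * A^(s-1))
          nlinarith [hmul, f4]
  -- Region 3 bound
  have P3 : ∫⁻ t in S3, f t ≤ ENNReal.ofReal (8/(1-(r+s)) * A^(r+s-1)) := by
    have key : ∀ t ∈ S3, f t
        ≤ ENNReal.ofReal ((2:ℝ)^(1-r)) * ENNReal.ofReal (|t|^(r+s-2)) := by
      intro t ht
      have ht2A : 2*A ≤ |t| := ht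
      have ht0 : (0:ℝ) < |t| := by linarith
      have h2' : |t| - |a| ≤ |t+a| := by
        have h := abs_sub_abs_le_abs_sub t (-a)
        rw [abs_neg, sub_neg_eq_add] at h
        exact h
      have h1 : |t|/2 ≤ 1 + |t+a| := by linarith
      have h2 : (1+|t+a|)^(r-1) ≤ (|t|/2)^(r-1) :=
        Real.rpow_le_rpow_of_nonpos (by positivity) h1 (by linarith)
      rw [← ENNReal.ofReal_mul (Real.rpow_nonneg (by norm_num) _)]
      apply ENNReal.ofReal_le_ofReal
      calc |t|^(s-1) * (1+|t+a|)^(r-1)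
          ≤ |t|^(s-1) * (|t|/2)^(r-1) :=
            mul_le_mul_of_nonneg_left h2 (Real.rpow_nonneg (abs_nonneg t) _)
        _ = 2^(1-r) * |t|^(r+s-2) := by
            rw [Real.div_rpow (abs_nonneg t) (by norm_num)]
            have htt : |t|^(s-1) * |t|^(r-1) = |t|^(r+s-2) := by
              rw [← Real.rpow_add ht0]; ring_nf
            have h22 : (2:ℝ)^(1-r) * 2^(r-1) = 1 := by
              rw [← Real.rpow_add two_pos]; norm_num
            have h2pos : (0:ℝ) < 2^(r-1) := Real.rpow_pos_of_pos two_pos _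
            field_simp
            rw [htt]
            linear_combination (-(|t|^(r+s-2))) * h22
    have hQ := lint_Ioi_rpow (r+s-2) (2*A) (by linarith) (by positivity)
    rw [show r+s-2+1 = r+s-1 by ring] at hQ
    calc ∫⁻ t in S3, f t
        ≤ ∫⁻ t in S3, ENNReal.ofReal ((2:ℝ)^(1-r)) * ENNReal.ofReal (|t|^(r+s-2)) :=
          setLIntegral_mono' hS3 key
      _ = ENNReal.ofReal ((2:ℝ)^(1-r)) * ∫⁻ t in S3, ENNReal.ofReal (|t|^(r+s-2)) :=
          lintegral_const_mul' _ _ ENNReal.ofReal_ne_top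
      _ ≤ ENNReal.ofReal ((2:ℝ)^(1-r)) *
            (2 * ENNReal.ofReal (-(2*A)^(r+s-1)/(r+s-1))) := by
          apply mul_le_mul_right
          calc ∫⁻ t in S3, ENNReal.ofReal (|t|^(r+s-2))
              ≤ 2 * ∫⁻ t in Set.Ioi (2*A), ENNReal.ofReal (|t|^(r+s-2)) :=
                even_bound_tail _ (fun x => by rw [abs_neg]) (2*A)
            _ = 2 * ENNReal.ofReal (-(2*A)^(r+s-1)/(r+s-1)) := by rw [hQ]
      _ ≤ ENNReal.ofReal (8/(1-(r+s)) * A^(r+s-1)) := by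
          rw [show (2:ENNReal) = ENNReal.ofReal 2 by simp,
            ← ENNReal.ofReal_mul (by norm_num),
            ← ENNReal.ofReal_mul (Real.rpow_nonneg (by norm_num) _)]
          apply ENNReal.ofReal_le_ofReal
          have hne : r+s-1 ≠ 0 := by linarith
          have hq : -(2*A)^(r+s-1)/(r+s-1) = (2*A)^(r+s-1)/(1-(r+s)) := by
            field_simp
            ring
          have g1 : (2*A)^(r+s-1) = 2^(r+s-1) * A^(r+s-1) :=
            Real.mul_rpow (by norm_num) hA0.le
          have g2 : (2:ℝ)^(r+s-1) ≤ 1 :=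
            Real.rpow_le_one_of_one_le_of_nonpos one_le_two (by linarith)
          have g3 : (2:ℝ)^(1-r) ≤ 2 := by
            have h := Real.rpow_le_rpow_of_exponent_le one_le_two
              (by linarith : 1-r ≤ (1:ℝ))
            rwa [Real.rpow_one] at h
          have g4 : (0:ℝ) ≤ 2^(r+s-1) := Real.rpow_nonneg (by norm_num) _
          have g5 : (0:ℝ) ≤ A^(r+s-1) := Real.rpow_nonneg hA0.le _
          have g6 : (0:ℝ) ≤ (2:ℝ)^(1-r) := Real.rpow_nonneg (by norm_num) _
          rw [hq]
          have hrw : (2:ℝ)^(1-r) * (2 * ((2*A)^(r+s-1)/(1-(r+s))))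
              = (2^(1-r) * 2 * (2*A)^(r+s-1)) / (1-(r+s)) := by ring
          rw [hrw, div_le_iff₀ hpos,
            show 8/(1-(r+s))*A^(r+s-1)*(1-(r+s)) = 8*A^(r+s-1) by field_simp]
          rw [g1]
          nlinarith [mul_le_mul g3 g2 g4 (by norm_num : (0:ℝ) ≤ 2),
            mul_le_mul_of_nonneg_right
              (mul_le_mul g3 g2 g4 (by norm_num : (0:ℝ) ≤ 2)) g5]
  -- Assemble
  have hcover : ∀ t, f t ≤ S1.indicator f t + S2.indicator f t + S3.indicator f t := by
    intro t
    by_cases h1 : |t| < b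
    · rw [Set.indicator_of_mem (show t ∈ S1 from abs_lt.mp h1)]
      exact le_trans (self_le_add_right _ _) (self_le_add_right _ _)
    · push_neg at h1
      by_cases h2 : |t| < 2*A
      · rw [Set.indicator_of_mem (show t ∈ S2 from ⟨h1, h2⟩)]
        exact le_trans (self_le_add_left _ _) (self_le_add_right _ _)
      · push_neg at h2
        rw [Set.indicator_of_mem (show t ∈ S3 from h2)]
        exact self_le_add_left _ _
  calc ∫⁻ t, f t
      ≤ ∫⁻ t, (S1.indicator f t + S2.indicator f t + S3.indicator f t) :=
        lintegral_mono hcover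
    _ = (∫⁻ t in S1, f t) + (∫⁻ t in S2, f t) + (∫⁻ t in S3, f t) := by
        rw [lintegral_add_left (f := fun t => S1.indicator f t + S2.indicator f t)
            ((hfm.indicator hS1).add (hfm.indicator hS2)),
          lintegral_add_left (hfm.indicator hS1),
          lintegral_indicator hS1, lintegral_indicator hS2, lintegral_indicator hS3]
    _ ≤ ENNReal.ofReal (4/s * A^(r+s-1)) + ENNReal.ofReal (16/r * A^(r+s-1))
          + ENNReal.ofReal (8/(1-(r+s)) * A^(r+s-1)) :=
        add_le_add (add_le_add P1 P2) P3
    _ = ENNReal.ofReal ((4/s + 16/r + 8/(1-(r+s))) * A^(r+s-1)) := by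
        rw [← ENNReal.ofReal_add
            (mul_nonneg (by positivity) (Real.rpow_nonneg hA0.le _))
            (mul_nonneg (by positivity) (Real.rpow_nonneg hA0.le _)),
          ← ENNReal.ofReal_add
            (add_nonneg (mul_nonneg (by positivity) (Real.rpow_nonneg hA0.le _))
              (mul_nonneg (by positivity) (Real.rpow_nonneg hA0.le _)))
            (mul_nonneg (by positivity) (Real.rpow_nonneg hA0.le _))]
        ring_nf
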